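/- Let (X, 𝔉, P) be a probability space, let h ≥ 1 be an integer, and let f_0, f_1, …, f_h : X → [0, ∞] be measurable functions. For a real number δ > 0, let A_δ be the set of points a ∈ X such that f_0(a) ≤ (1+δ)·∫_X f_0 dP and, for every i ∈ {1,…,h}, f_i(a) ≤ ((1+δ)·2h/δ)·∫_X f_i dP. Then P(A_δ) ≥ δ/(2+2δ). -/

import Mathlib

open MeasureTheory
open scoped ENNReal

lemma markov_aux {X : Type*} [MeasurableSpace X] (P : Measure X) [IsProbabilityMeasure P]
    (f : X → ENNReal) (hf : Measurable f) (r : ENNReal) (hr : r ≠ 0) (hr' : r ≠ ∞) :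
    P {a | r * ∫⁻ x, f x ∂P < f a} ≤ r⁻¹ := by
  set I := ∫⁻ x, f x ∂P with hI
  rcases eq_or_ne I 0 with h0 | h0
  · have hz : ∀ᵐ a ∂P, f a = 0 := (lintegral_eq_zero_iff hf).mp h0
    have : P {a | ¬ f a = 0} = 0 := ae_iff.mp hz
    have hsub : {a | r * I < f a} ⊆ {a | ¬ f a = 0} := by
      intro a ha
      simp only [Set.mem_setOf_eq] at *
      intro hfa
      rw [hfa] at ha
      exact (not_lt_of_ge zero_le) ha
    calc P {a | r * I < f a} ≤ P {a | ¬ f a = 0} := measure_mono hsub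
      _ = 0 := this
      _ ≤ r⁻¹ := zero_le
  rcases eq_or_ne I ∞ with hT | hT
  · have : r * I = ∞ := by rw [hT, ENNReal.mul_top hr]
    have : {a | r * I < f a} = ∅ := by
      ext a; simp [this]
    rw [this]
    simp
  · have hmark := meas_ge_le_lintegral_div (μ := P) hf.aemeasurable (ε := r * I)
      (mul_ne_zero hr h0) (ENNReal.mul_ne_top hr' hT)
    have hsub : {a | r * I < f a} ⊆ {a | r * I ≤ f a} := fun a ha => le_of_lt (Set.mem_setOf_eq ▸ ha)
    calc P {a | r * I < f a} ≤ P {a | r * I ≤ f a} := measure_mono hsub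
      _ ≤ I / (r * I) := hmark
      _ = r⁻¹ := by
          rw [div_eq_mul_inv, ENNReal.mul_inv (Or.inl hr) (Or.inr h0),
            ← mul_assoc, mul_comm I r⁻¹, mul_assoc, ENNReal.mul_inv_cancel h0 hT, mul_one]


/-- **Lemma 5.3 (lemma:elem).** Let `(X, 𝔉, P)` be a probability space, `h ≥ 1` an integer,
and `f 0, f 1, …, f h : X → [0,∞]` measurable. For `δ > 0`, the set `A_δ` of points `a`
with `f 0 a ≤ (1+δ)·∫ f 0 dP` and `f i a ≤ ((1+δ)·2h/δ)·∫ f i dP` for all `1 ≤ i ≤ h`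
satisfies `P(A_δ) ≥ δ/(2+2δ)`. -/
theorem stmt_5 {X : Type*} [MeasurableSpace X] (P : Measure X) [IsProbabilityMeasure P]
    (h : ℕ) (hh : 1 ≤ h) (f : ℕ → X → ENNReal) (hf : ∀ i ≤ h, Measurable (f i))
    (δ : ℝ) (hδ : 0 < δ) :
    ENNReal.ofReal (δ / (2 + 2 * δ)) ≤
      P {a : X | f 0 a ≤ ENNReal.ofReal (1 + δ) * ∫⁻ x, f 0 x ∂P ∧
          ∀ i, 1 ≤ i → i ≤ h →
            f i a ≤ ENNReal.ofReal ((1 + δ) * (2 * h) / δ) * ∫⁻ x, f i x ∂P} := by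
  have hδ1 : (0:ℝ) < 1 + δ := by linarith
  have hhr : (0:ℝ) < (h:ℝ) := by exact_mod_cast Nat.pos_of_ne_zero (by omega)
  set c0 : ENNReal := ENNReal.ofReal (1 + δ) with hc0
  set ci : ENNReal := ENNReal.ofReal ((1 + δ) * (2 * h) / δ) with hci
  have hcipos : (0:ℝ) < (1 + δ) * (2 * h) / δ := by positivity
  have hc0ne : c0 ≠ 0 := by simp [hc0, ENNReal.ofReal_pos.mpr hδ1, ne_of_gt]
  have hcine : ci ≠ 0 := by simp [hci, ENNReal.ofReal_pos.mpr hcipos, ne_of_gt]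
  set A := {a : X | f 0 a ≤ c0 * ∫⁻ x, f 0 x ∂P ∧
      ∀ i, 1 ≤ i → i ≤ h → f i a ≤ ci * ∫⁻ x, f i x ∂P} with hA
  have hAm : MeasurableSet A := by
    have : A = (f 0 ⁻¹' Set.Iic (c0 * ∫⁻ x, f 0 x ∂P)) ∩
        ⋂ i, ⋂ (_ : 1 ≤ i), ⋂ (_ : i ≤ h), f i ⁻¹' Set.Iic (ci * ∫⁻ x, f i x ∂P) := by
      ext a; simp [hA, Set.mem_iInter]
    rw [this]
    exact ((hf 0 (Nat.zero_le h)) measurableSet_Iic).inter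
      (MeasurableSet.iInter fun i => MeasurableSet.iInter fun h1 =>
        MeasurableSet.iInter fun h2 => (hf i h2) measurableSet_Iic)
  -- complement bound
  have hsub : Aᶜ ⊆ {a | c0 * ∫⁻ x, f 0 x ∂P < f 0 a} ∪
      ⋃ i ∈ Finset.Icc 1 h, {a | ci * ∫⁻ x, f i x ∂P < f i a} := by
    intro a ha
    simp only [hA, Set.mem_compl_iff, Set.mem_setOf_eq, not_and_or, not_forall, not_le] at ha
    rcases ha with ha | ha
    · exact Or.inl ha
    · obtain ⟨i, h1, h2, hlt⟩ := ha
      exact Or.inr (Set.mem_biUnion (Finset.mem_Icc.mpr ⟨h1, h2⟩) hlt)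
  set B : ENNReal := c0⁻¹ + h * ci⁻¹ with hB
  have hAc : P Aᶜ ≤ B := by
    calc P Aᶜ ≤ P ({a | c0 * ∫⁻ x, f 0 x ∂P < f 0 a} ∪
        ⋃ i ∈ Finset.Icc 1 h, {a | ci * ∫⁻ x, f i x ∂P < f i a}) := measure_mono hsub
      _ ≤ P {a | c0 * ∫⁻ x, f 0 x ∂P < f 0 a} +
          P (⋃ i ∈ Finset.Icc 1 h, {a | ci * ∫⁻ x, f i x ∂P < f i a}) := measure_union_le _ _
      _ ≤ c0⁻¹ + ∑ i ∈ Finset.Icc 1 h, P {a | ci * ∫⁻ x, f i x ∂P < f i a} := by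
          gcongr
          · exact markov_aux P (f 0) (hf 0 (Nat.zero_le h)) c0 hc0ne ENNReal.ofReal_ne_top
          · exact measure_biUnion_finset_le _ _
      _ ≤ c0⁻¹ + ∑ i ∈ Finset.Icc 1 h, ci⁻¹ := by
          gcongr with i hi
          exact markov_aux P (f i) (hf i (Finset.mem_Icc.mp hi).2) ci hcine ENNReal.ofReal_ne_top
      _ = B := by
          rw [hB, Finset.sum_const, Nat.card_Icc]
          simp [nsmul_eq_mul]
  have hBtop : B ≠ ∞ := by
    apply ENNReal.add_ne_top.mpr
    constructor
    · exact ENNReal.inv_ne_top.mpr hc0ne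
    · exact ENNReal.mul_ne_top (by simp) (ENNReal.inv_ne_top.mpr hcine)
  have hsum : ENNReal.ofReal (δ / (2 + 2 * δ)) + B ≤ 1 := by
    have e0 : c0⁻¹ = ENNReal.ofReal (1 + δ)⁻¹ := by
      rw [hc0, ← ENNReal.ofReal_inv_of_pos hδ1]
    have e1 : ci⁻¹ = ENNReal.ofReal ((1 + δ) * (2 * h) / δ)⁻¹ := by
      rw [hci, ← ENNReal.ofReal_inv_of_pos hcipos]
    have e2 : (h : ENNReal) = ENNReal.ofReal h := by simp
    rw [hB, e0, e1, e2, ← ENNReal.ofReal_mul (by positivity), ← ENNReal.ofReal_add (by positivity) (by positivity), ← ENNReal.ofReal_add (by positivity) (by positivity), ← ENNReal.ofReal_one]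
    apply ENNReal.ofReal_le_ofReal
    have hne : ((1:ℝ) + δ) ≠ 0 := ne_of_gt hδ1
    have hne2 : (δ:ℝ) ≠ 0 := ne_of_gt hδ
    have hne3 : (h:ℝ) ≠ 0 := ne_of_gt hhr
    apply le_of_eq
    field_simp
    ring
  have h1 : (1:ENNReal) = P A + P Aᶜ := (prob_add_prob_compl hAm).symm
  have : ENNReal.ofReal (δ / (2 + 2 * δ)) + B ≤ P A + B := by
    calc ENNReal.ofReal (δ / (2 + 2 * δ)) + B ≤ 1 := hsum
      _ = P A + P Aᶜ := h1
      _ ≤ P A + B := by gcongr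
  exact (ENNReal.add_le_add_iff_right hBtop).mp this
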